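/- Let q_1, …, q_p : ℝⁿ → ℝ be continuously differentiable and let f(x) = max_{j=1,…,p} q_j(x). Fix x ∈ ℝⁿ and let J(x) = {j : q_j(x) = f(x)} be the set of active indices at x. Then for every d ∈ ℝⁿ, the Clarke directional derivative satisfies f°(x; d) ≤ max_{j ∈ J(x)} ⟨∇q_j(x), d⟩; in particular f°(x; d) ≤ max_{j=1,…,p} ⟨∇q_j(x), d⟩. -/

import Mathlib

open Filter Topology
open scoped InnerProductSpace

/-- The Clarke directional derivative of `f` at `x` along `d`:
`f°(x; d) = limsup_{y → x, t ↓ 0} (f (y + t d) - f y) / t`. -/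
noncomputable def clarkeDeriv {n : ℕ} (f : EuclideanSpace ℝ (Fin n) → ℝ)
    (x d : EuclideanSpace ℝ (Fin n)) : ℝ :=
  Filter.limsup (fun p : EuclideanSpace ℝ (Fin n) × ℝ => (f (p.1 + p.2 • d) - f p.1) / p.2)
    ((𝓝 x) ×ˢ (𝓝[>] (0 : ℝ)))

/-- Let `q₁, …, q_p : ℝⁿ → ℝ` be continuously differentiable and let
`f x = max_j q_j x`.  Fix `x` and let `J` be the set of active indices at `x`.  Then for
every `d`, the Clarke directional derivative satisfies
`f°(x; d) ≤ max_{j ∈ J} ⟪∇q_j(x), d⟫`; in particular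
`f°(x; d) ≤ max_{j} ⟪∇q_j(x), d⟫`. -/
theorem clarke_deriv_finite_max_le {n p : ℕ} (hp : 0 < p)
    (q : Fin p → EuclideanSpace ℝ (Fin n) → ℝ)
    (hq : ∀ j, ContDiff ℝ 1 (q j))
    (f : EuclideanSpace ℝ (Fin n) → ℝ)
    (hf : ∀ y, IsGreatest (Set.range fun j => q j y) (f y))
    (x d : EuclideanSpace ℝ (Fin n))
    (J : Finset (Fin p)) (hJ : J = Finset.univ.filter fun j => q j x = f x)
    (hJne : J.Nonempty) :
    clarkeDeriv f x d ≤ J.sup' hJne (fun j => ⟪gradient (q j) x, d⟫_ℝ) ∧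
      clarkeDeriv f x d ≤
        Finset.univ.sup' ⟨⟨0, hp⟩, Finset.mem_univ _⟩ (fun j => ⟪gradient (q j) x, d⟫_ℝ) := by
  have hdiff : ∀ j, Differentiable ℝ (q j) := fun j => (hq j).differentiable one_ne_zero
  have hub : ∀ j z, q j z ≤ f z := fun j z => (hf z).2 ⟨j, rfl⟩
  have hgrad : ∀ j, ⟪gradient (q j) x, d⟫_ℝ = fderiv ℝ (q j) x d := fun j => by
    simp [gradient, InnerProductSpace.toDual_symm_apply]
  set M := J.sup' hJne (fun j => ⟪gradient (q j) x, d⟫_ℝ) with hM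
  set m := J.inf' hJne (fun j => ⟪gradient (q j) x, d⟫_ℝ) with hm
  set F := ((𝓝 x) ×ˢ (𝓝[>] (0 : ℝ))) with hF
  -- the key eventual estimate
  have key : ∀ ε > (0:ℝ), ∀ᶠ pa in F,
      (f (pa.1 + pa.2 • d) - f pa.1) / pa.2 ≤ M + ε ∧
      m - ε ≤ (f (pa.1 + pa.2 • d) - f pa.1) / pa.2 := by
    intro ε hε
    set ε' : ℝ := ε / (‖d‖ + 1) with hε'
    have hd1 : (0:ℝ) < ‖d‖ + 1 := by positivity
    have hε'pos : 0 < ε' := div_pos hε hd1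
    have hε'd : ε' * ‖d‖ ≤ ε := by
      rw [hε', div_mul_eq_mul_div, div_le_iff₀ hd1]
      nlinarith [norm_nonneg d]
    -- a good neighborhood of x
    have hnhds : ∀ᶠ z in 𝓝 x,
        (∀ j, ‖fderiv ℝ (q j) z - fderiv ℝ (q j) x‖ ≤ ε') ∧
        (∀ j, j ∉ J → q j z < f z) := by
      have h1 : ∀ᶠ z in 𝓝 x, ∀ j, ‖fderiv ℝ (q j) z - fderiv ℝ (q j) x‖ ≤ ε' := by
        rw [eventually_all]
        intro j
        have hc : Continuous fun z => ‖fderiv ℝ (q j) z - fderiv ℝ (q j) x‖ :=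
          (((hq j).continuous_fderiv one_ne_zero).sub continuous_const).norm
        have h0 : Filter.Tendsto (fun z => ‖fderiv ℝ (q j) z - fderiv ℝ (q j) x‖)
            (𝓝 x) (𝓝 0) := by
          have := hc.continuousAt (x := x)
          simpa [ContinuousAt] using this
        exact h0.eventually (eventually_le_nhds hε'pos)
      have h2 : ∀ᶠ z in 𝓝 x, ∀ j, j ∉ J → q j z < f z := by
        rw [eventually_all]
        intro j
        by_cases hjJ : j ∈ J
        · exact Filter.Eventually.of_forall fun z h => absurd hjJ h
        · obtain ⟨i₀, hi₀⟩ := hJne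
          have hjlt : q j x < f x := by
            rcases lt_or_eq_of_le (hub j x) with h | h
            · exact h
            · exact absurd (hJ ▸ Finset.mem_filter.mpr ⟨Finset.mem_univ j, h⟩) hjJ
          have hfx : f x = q i₀ x := by
            have := (Finset.mem_filter.mp (hJ ▸ hi₀)).2
            linarith [this]
          have hcont : ∀ᶠ z in 𝓝 x, q j z < q i₀ z := by
            have hqj : ContinuousAt (q j) x := (hq j).continuous.continuousAt
            have hqi : ContinuousAt (q i₀) x := (hq i₀).continuous.continuousAt
            exact hqj.eventually_lt hqi (by rw [← hfx] at *; linarith)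
          exact hcont.mono fun z hz _ => lt_of_lt_of_le hz (hub i₀ z)
      exact h1.and h2
    rw [Metric.eventually_nhds_iff] at hnhds
    obtain ⟨δ, hδpos, hδ⟩ := hnhds
    have hball : ∀ z ∈ Metric.ball x δ,
        (∀ j, ‖fderiv ℝ (q j) z - fderiv ℝ (q j) x‖ ≤ ε') ∧
        (∀ j, j ∉ J → q j z < f z) := fun z hz => hδ (Metric.mem_ball.mp hz)
    -- eventual facts in the product filter
    have h1 : ∀ᶠ pa : EuclideanSpace ℝ (Fin n) × ℝ in F, pa.1 ∈ Metric.ball x δ :=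
      tendsto_fst.eventually
        (Filter.eventually_of_mem (Metric.ball_mem_nhds x hδpos) fun z hz => hz)
    have htend : Filter.Tendsto (fun pa : EuclideanSpace ℝ (Fin n) × ℝ => pa.1 + pa.2 • d)
        F (𝓝 x) := by
      have : Filter.Tendsto (fun pa : EuclideanSpace ℝ (Fin n) × ℝ => pa.1 + pa.2 • d)
          F (𝓝 (x + (0:ℝ) • d)) :=
        tendsto_fst.add ((tendsto_snd.mono_right nhdsWithin_le_nhds).smul_const d)
      simpa using this
    have h2 : ∀ᶠ pa : EuclideanSpace ℝ (Fin n) × ℝ in F,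
        pa.1 + pa.2 • d ∈ Metric.ball x δ :=
      htend.eventually
        (Filter.eventually_of_mem (Metric.ball_mem_nhds x hδpos) fun z hz => hz)
    have h3 : ∀ᶠ pa : EuclideanSpace ℝ (Fin n) × ℝ in F, 0 < pa.2 :=
      tendsto_snd.eventually (eventually_mem_nhdsWithin)
    filter_upwards [h1, h2, h3] with pa hy hz ht
    obtain ⟨y, t⟩ := pa
    simp only at hy hz ht ⊢
    -- pick an active index at y + t • d
    obtain ⟨jm, hjm⟩ := (hf (y + t • d)).1
    have hjJ : jm ∈ J := by
      by_contra hnot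
      exact absurd hjm (ne_of_lt ((hball _ hz).2 jm hnot))
    -- mean value estimate
    have mvt := Convex.norm_image_sub_le_of_norm_hasFDerivWithin_le'
      (f := q jm) (f' := fun z => fderiv ℝ (q jm) z) (φ := fderiv ℝ (q jm) x) (C := ε')
      (fun z hzs => (hdiff jm z).hasFDerivAt.hasFDerivWithinAt)
      (fun z hzs => (hball z hzs).1 jm) (convex_ball x δ) hy hz
    have hsub : y + t • d - y = t • d := by abel
    rw [hsub] at mvt
    have hφ : (fderiv ℝ (q jm) x) (t • d) = t * ⟪gradient (q jm) x, d⟫_ℝ := by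
      rw [map_smul, hgrad jm]; simp
    have hnorm : ‖t • d‖ = t * ‖d‖ := by
      rw [norm_smul, Real.norm_eq_abs, abs_of_pos ht]
    have hest : q jm (y + t • d) - q jm y ≤ t * ⟪gradient (q jm) x, d⟫_ℝ + ε' * (t * ‖d‖) := by
      have h' : q jm (y + t • d) - q jm y - (fderiv ℝ (q jm) x) (t • d) ≤ ε' * ‖t • d‖ :=
        le_trans (le_abs_self _) (by rwa [Real.norm_eq_abs] at mvt)
      rw [hφ, hnorm] at h'
      linarith
    have hMjm : ⟪gradient (q jm) x, d⟫_ℝ ≤ M := Finset.le_sup' (fun j => ⟪gradient (q j) x, d⟫_ℝ) hjJ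
    have hfineq : f (y + t • d) - f y ≤ t * (M + ε) := by
      have h1 : f (y + t • d) - f y ≤ q jm (y + t • d) - q jm y := by
        rw [← hjm]; linarith [hub jm y]
      have h2 : t * ⟪gradient (q jm) x, d⟫_ℝ + ε' * (t * ‖d‖) ≤ t * (M + ε) := by
        have : ε' * ‖d‖ ≤ ε := hε'd
        nlinarith [ht.le]
      linarith
    constructor
    · rw [div_le_iff₀ ht]
      linarith [hfineq]
    · -- lower bound
      obtain ⟨jl, hjl⟩ := (hf y).1
      have hjlJ : jl ∈ J := by
        by_contra hnot
        exact absurd hjl (ne_of_lt ((hball _ hy).2 jl hnot))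
      have mvt' := Convex.norm_image_sub_le_of_norm_hasFDerivWithin_le'
        (f := q jl) (f' := fun z => fderiv ℝ (q jl) z) (φ := fderiv ℝ (q jl) x) (C := ε')
        (fun z hzs => (hdiff jl z).hasFDerivAt.hasFDerivWithinAt)
        (fun z hzs => (hball z hzs).1 jl) (convex_ball x δ) hy hz
      rw [hsub] at mvt'
      have hφ' : (fderiv ℝ (q jl) x) (t • d) = t * ⟪gradient (q jl) x, d⟫_ℝ := by
        rw [map_smul, hgrad jl]; simp
      have h'' : -(ε' * ‖t • d‖) ≤ q jl (y + t • d) - q jl y - (fderiv ℝ (q jl) x) (t • d) := by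
        have := neg_abs_le (q jl (y + t • d) - q jl y - (fderiv ℝ (q jl) x) (t • d))
        rw [Real.norm_eq_abs] at mvt'
        linarith
      rw [hφ', hnorm] at h''
      have hmjl : m ≤ ⟪gradient (q jl) x, d⟫_ℝ :=
        Finset.inf'_le (fun j => ⟪gradient (q j) x, d⟫_ℝ) hjlJ
      have hlow : t * (m - ε) ≤ f (y + t • d) - f y := by
        have h1 : q jl (y + t • d) - q jl y ≤ f (y + t • d) - f y := by
          rw [← hjl]; linarith [hub jl (y + t • d)]
        have h2 : t * (m - ε) ≤ t * ⟪gradient (q jl) x, d⟫_ℝ - ε' * (t * ‖d‖) := by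
          nlinarith [ht.le, hε'd]
        linarith
      rw [le_div_iff₀ ht]
      linarith [hlow]
  -- conclude
  have main : clarkeDeriv f x d ≤ M := by
    refine le_of_forall_pos_le_add fun ε hε => ?_
    have hev := key ε hε
    have hcob : Filter.IsCoboundedUnder (· ≤ ·) F
        (fun pa : EuclideanSpace ℝ (Fin n) × ℝ => (f (pa.1 + pa.2 • d) - f pa.1) / pa.2) :=
      Filter.isCoboundedUnder_le_of_eventually_le F (x := m - ε) (hev.mono fun pa h => h.2)
    exact Filter.limsup_le_of_le hcob (hev.mono fun pa h => h.1)
  refine ⟨main, main.trans ?_⟩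
  exact Finset.sup'_le _ _ fun j hj => Finset.le_sup' (fun j => ⟪gradient (q j) x, d⟫_ℝ) (Finset.mem_univ j)
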